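/- In a tree, if u and v are adjacent with ẽ(u) > ẽ(v), then some marked node in the component of G − u containing v is at distance exactly ẽ(v) from v (i.e., the farthest marked node from u lies on v's side). -/
import Mathlib


/-- In a finite tree with nonempty infected set `I`, if `u` and `v` are adjacent and
`ẽ(u) > ẽ(v)`, then some infected node `a` in the component of `G − u` containing `v`
(encoded by `d(u,a) = d(v,a) + 1`) satisfies `d(v,a) = ẽ(v)` and `d(u,a) = ẽ(u) = ẽ(v)+1`. -/
theorem stmt_6 {V : Type*} [Fintype V] [DecidableEq V]
    (G : SimpleGraph V) (hG : G.IsTree)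
    (I : Finset V) (hI : I.Nonempty)
    (e : V → ℕ) (he : ∀ x, e x = I.sup' hI (fun y => G.dist x y))
    (u v : V) (hadj : G.Adj u v) (hlt : e v < e u) :
    ∃ a ∈ I, G.dist u a = G.dist v a + 1 ∧ G.dist v a = e v ∧
      G.dist u a = e u ∧ e u = e v + 1 := by
  have hconn := hG.isConnected
  obtain ⟨a, ha, hda⟩ := Finset.exists_mem_eq_sup' hI (fun y => G.dist u y)
  have hua : G.dist u a = e u := by rw [he u, hda]
  have hva : G.dist v a ≤ e v := by
    rw [he v]; exact Finset.le_sup' _ ha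
  have htri : G.dist u a ≤ G.dist u v + G.dist v a := hconn.dist_triangle
  rw [SimpleGraph.dist_eq_one_iff_adj.mpr hadj] at htri
  have h1 : e u ≤ 1 + G.dist v a := hua ▸ htri
  have h2 : G.dist v a = e v := le_antisymm hva (by omega)
  exact ⟨a, ha, by omega, h2, hua, by omega⟩
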